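/- Let H be a Hopf algebra and γ : H ⊗ H → K a 2-cocycle (convolution invertible, unital, satisfying γ(g₍₁₎⊗h₍₁₎)γ(g₍₂₎h₍₂₎⊗k) = γ(h₍₁₎⊗k₍₁₎)γ(g⊗h₍₂₎k₍₂₎)). Then the twisted product h ·_γ k := γ(h₍₁₎⊗k₍₁₎) h₍₂₎k₍₂₎ γ̄(h₍₃₎⊗k₍₃₎) is associative. -/

import Mathlib

open TensorProduct LinearMap

noncomputable section

variable (R H : Type*) [CommRing R] [Ring H] [HopfAlgebra R H]

/-- The multiplication of `H` as a linear map. -/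
abbrev mulH : H ⊗[R] H →ₗ[R] H := LinearMap.mul' R H

/-- The antipode of `H`. -/
abbrev Sa : H →ₗ[R] H := HopfAlgebra.antipode (R := R)

/-- The comultiplication `h ⊗ k ↦ (h₍₁₎ ⊗ k₍₁₎) ⊗ (h₍₂₎ ⊗ k₍₂₎)` on `H ⊗ H`. -/
def comul2 : H ⊗[R] H →ₗ[R] (H ⊗[R] H) ⊗[R] (H ⊗[R] H) :=
  (tensorTensorTensorComm R H H H H).toLinearMap ∘ₗ map (Coalgebra.comul (R := R)) (Coalgebra.comul (R := R))

/-- The (Coalgebra.counit (R := R)) `h ⊗ k ↦ ε(h)ε(k)` on `H ⊗ H`. -/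
def counit2 : H ⊗[R] H →ₗ[R] R :=
  (TensorProduct.lid R R).toLinearMap ∘ₗ map (Coalgebra.counit (R := R)) (Coalgebra.counit (R := R))

/-- Iterated comultiplication `h ↦ (h₍₁₎ ⊗ h₍₂₎) ⊗ h₍₃₎`. -/
def comul3 : H →ₗ[R] (H ⊗[R] H) ⊗[R] H := map (Coalgebra.comul (R := R)) LinearMap.id ∘ₗ (Coalgebra.comul (R := R))

/-- Iterated comultiplication `h ↦ ((h₍₁₎ ⊗ h₍₂₎) ⊗ h₍₃₎) ⊗ h₍₄₎`. -/
def comul4 : H →ₗ[R] ((H ⊗[R] H) ⊗[R] H) ⊗[R] H := map (comul3 R H) LinearMap.id ∘ₗ (Coalgebra.comul (R := R))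

/-- Convolution product of two functionals with respect to a given comultiplication. -/
def convOn {C : Type*} [AddCommMonoid C] [Module R C]
    (Δc : C →ₗ[R] C ⊗[R] C) (f g : C →ₗ[R] R) : C →ₗ[R] R :=
  LinearMap.mul' R R ∘ₗ map f g ∘ₗ Δc

/-- The comultiplication on the triple tensor product `(H ⊗ H) ⊗ H`. -/
def comulC3 : (H ⊗[R] H) ⊗[R] H →ₗ[R] ((H ⊗[R] H) ⊗[R] H) ⊗[R] ((H ⊗[R] H) ⊗[R] H) :=
  (tensorTensorTensorComm R (H ⊗[R] H) (H ⊗[R] H) H H).toLinearMap ∘ₗ map (comul2 R H) (Coalgebra.comul (R := R))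

/-- `γ` is a 2-cocycle with convolution inverse `γ'` relative to the product `μ`:
convolution invertible, unital, and satisfying the 2-cocycle condition
`γ(g₍₁₎⊗h₍₁₎)γ(g₍₂₎h₍₂₎⊗k) = γ(h₍₁₎⊗k₍₁₎)γ(g⊗h₍₂₎k₍₂₎)`. -/
structure IsCocycle (μ : H ⊗[R] H →ₗ[R] H) (γ γ' : H ⊗[R] H →ₗ[R] R) : Prop where
  cocycle : convOn R (comulC3 R H) (LinearMap.mul' R R ∘ₗ map γ (Coalgebra.counit (R := R))) (γ ∘ₗ map μ LinearMap.id)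
    = convOn R (comulC3 R H)
        (LinearMap.mul' R R ∘ₗ map (Coalgebra.counit (R := R)) γ ∘ₗ (TensorProduct.assoc R H H H).toLinearMap)
        (γ ∘ₗ map LinearMap.id μ ∘ₗ (TensorProduct.assoc R H H H).toLinearMap)
  conv_inv_right : convOn R (comul2 R H) γ γ' = counit2 R H
  conv_inv_left : convOn R (comul2 R H) γ' γ = counit2 R H
  unital_right : ∀ h : H, γ (h ⊗ₜ[R] 1) = (Coalgebra.counit (R := R)) h
  unital_left : ∀ h : H, γ (1 ⊗ₜ[R] h) = (Coalgebra.counit (R := R)) h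

/-- The twisted product `h ·_γ k = γ(h₍₁₎⊗k₍₁₎) h₍₂₎∙k₍₂₎ γ'(h₍₃₎⊗k₍₃₎)`, where `∙` is
the (possibly already deformed) product `μ`. -/
def twistMul (μ : H ⊗[R] H →ₗ[R] H) (γ γ' : H ⊗[R] H →ₗ[R] R) : H ⊗[R] H →ₗ[R] H :=
  (TensorProduct.lid R H).toLinearMap ∘ₗ (TensorProduct.rid R (R ⊗[R] H)).toLinearMap
    ∘ₗ map (map γ μ) γ' ∘ₗ map (comul2 R H) LinearMap.id ∘ₗ comul2 R H

/-- `u_γ(h) = γ(h₍₁₎ ⊗ S(h₍₂₎))`. -/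
def uMap (γ : H ⊗[R] H →ₗ[R] R) : H →ₗ[R] R :=
  γ ∘ₗ map LinearMap.id (Sa R H) ∘ₗ (Coalgebra.comul (R := R))

/-- `ū_γ(h) = γ'(S(h₍₁₎) ⊗ h₍₂₎)`. -/
def ubarMap (γ' : H ⊗[R] H →ₗ[R] R) : H →ₗ[R] R :=
  γ' ∘ₗ map (Sa R H) LinearMap.id ∘ₗ (Coalgebra.comul (R := R))

/-- The twisted antipode `S_γ(h) = u_γ(h₍₁₎) S(h₍₂₎) ū_γ(h₍₃₎)`. -/
def Stw (γ γ' : H ⊗[R] H →ₗ[R] R) : H →ₗ[R] H :=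
  (TensorProduct.lid R H).toLinearMap ∘ₗ (TensorProduct.rid R (R ⊗[R] H)).toLinearMap
    ∘ₗ map (map (uMap R H γ) (Sa R H)) (ubarMap R H γ') ∘ₗ comul3 R H

/-- The (generalized) right adjoint coaction `h ↦ h₍₂₎ ⊗ S'(h₍₁₎) ∙ h₍₃₎`. -/
def AdGen (S' : H →ₗ[R] H) (μ : H ⊗[R] H →ₗ[R] H) : H →ₗ[R] H ⊗[R] H :=
  map LinearMap.id μ ∘ₗ (TensorProduct.assoc R H H H).toLinearMap
    ∘ₗ map ((TensorProduct.comm R H H).toLinearMap ∘ₗ map S' LinearMap.id) LinearMap.id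
    ∘ₗ comul3 R H

/-- The right adjoint coaction `Ad(h) = h₍₂₎ ⊗ S(h₍₁₎)h₍₃₎`. -/
def Ad : H →ₗ[R] H ⊗[R] H := AdGen R H (Sa R H) (mulH R H)

end

noncomputable section TwistAuxSection
namespace TwistAux
open Coalgebra

variable {R : Type*} [CommRing R]

section Defs
variable (R) (C : Type*) [AddCommGroup C] [Module R C] [CoalgebraStruct R C]

structure CoLaws : Prop where
  coassoc : (TensorProduct.assoc R C C C).toLinearMap ∘ₗ map (comul (R := R) (A := C)) id ∘ₗ comul
      = map id comul ∘ₗ comul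
  rCounit : map (counit (R := R) (A := C)) id ∘ₗ comul = (TensorProduct.mk R R C) 1
  lCounit : map id (counit (R := R) (A := C)) ∘ₗ comul = (TensorProduct.mk R C R).flip 1

end Defs

theorem coLaws_of (C : Type*) [AddCommGroup C] [Module R C] [Coalgebra R C] : CoLaws R C :=
  ⟨Coalgebra.coassoc, Coalgebra.rTensor_counit_comp_comul, Coalgebra.lTensor_counit_comp_comul⟩

section Laws
variable {C : Type*} [AddCommGroup C] [Module R C] [CoalgebraStruct R C]

theorem CoLaws.coassoc_symm (h : CoLaws R C) :
    map (comul (R := R) (A := C)) id ∘ₗ comul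
      = (TensorProduct.assoc R C C C).symm.toLinearMap ∘ₗ map id comul ∘ₗ comul := by
  rw [← h.coassoc]; ext x; simp

theorem comul_tensor_def {A B : Type*} [AddCommGroup A] [Module R A] [CoalgebraStruct R A]
    [AddCommGroup B] [Module R B] [CoalgebraStruct R B] :
    (comul (R := R) (A := A ⊗[R] B))
      = (tensorTensorTensorComm R A A B B).toLinearMap ∘ₗ map comul comul := rfl

theorem counit_tensor_def {A B : Type*} [AddCommGroup A] [Module R A] [CoalgebraStruct R A]
    [AddCommGroup B] [Module R B] [CoalgebraStruct R B] :
    (counit (R := R) (A := A ⊗[R] B)) = LinearMap.mul' R R ∘ₗ map counit counit := by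
  ext a b; simp [mul_comm]

theorem CoLaws.tensor {A B : Type*} [AddCommGroup A] [Module R A] [CoalgebraStruct R A]
    [AddCommGroup B] [Module R B] [CoalgebraStruct R B]
    (hA : CoLaws R A) (hB : CoLaws R B) : CoLaws R (A ⊗[R] B) := by
  constructor
  · have h1 : (TensorProduct.assoc R _ _ _).toLinearMap
        ∘ₗ map (comul (R := R) (A := A ⊗[R] B)) id ∘ₗ comul
        = ((TensorProduct.assoc R _ _ _).toLinearMap
            ∘ₗ map (tensorTensorTensorComm R A A B B).toLinearMap id
            ∘ₗ (tensorTensorTensorComm R (A ⊗[R] A) A (B ⊗[R] B) B).toLinearMap)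
          ∘ₗ map (map (comul (R := R) (A := A)) id ∘ₗ comul)
              (map (comul (R := R) (A := B)) id ∘ₗ comul) := by
      rw [TensorProduct.map_comp, comul_tensor_def]
      simp only [← comp_assoc]
      congr 1
      ext a a' b b'
      simp
    have h2 : map id (comul (R := R) (A := A ⊗[R] B)) ∘ₗ comul
        = (map id (tensorTensorTensorComm R A A B B).toLinearMap
            ∘ₗ (tensorTensorTensorComm R A (A ⊗[R] A) B (B ⊗[R] B)).toLinearMap)
          ∘ₗ map (map id (comul (R := R) (A := A)) ∘ₗ comul)
              (map id (comul (R := R) (A := B)) ∘ₗ comul) := by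
      rw [TensorProduct.map_comp, comul_tensor_def]
      simp only [← comp_assoc]
      congr 1
      ext a a' b b'
      simp
    rw [h1, h2, hA.coassoc_symm, hB.coassoc_symm, TensorProduct.map_comp, TensorProduct.map_comp]
    simp only [← comp_assoc]
    congr 2
    ext a a' a'' b b' b''
    simp
  · have h1 : map (counit (R := R) (A := A ⊗[R] B)) id ∘ₗ comul
        = (map (LinearMap.mul' R R) id ∘ₗ (tensorTensorTensorComm R R A R B).toLinearMap)
          ∘ₗ map (map (counit (R := R) (A := A)) id ∘ₗ comul)
              (map (counit (R := R) (A := B)) id ∘ₗ comul) := by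
      rw [TensorProduct.map_comp, comul_tensor_def, counit_tensor_def]
      simp only [← comp_assoc]
      congr 1
      ext a a' b b'
      simp
    rw [h1, hA.rCounit, hB.rCounit]
    ext a b
    simp
  · have h1 : map id (counit (R := R) (A := A ⊗[R] B)) ∘ₗ comul
        = (map id (LinearMap.mul' R R) ∘ₗ (tensorTensorTensorComm R A R B R).toLinearMap)
          ∘ₗ map (map id (counit (R := R) (A := A)) ∘ₗ comul)
              (map id (counit (R := R) (A := B)) ∘ₗ comul) := by
      rw [TensorProduct.map_comp, comul_tensor_def, counit_tensor_def]
      simp only [← comp_assoc]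
      congr 1
      ext a a' b b'
      simp
    rw [h1, hA.lCounit, hB.lCounit]
    ext a b
    simp

end Laws
section CMap
variable {C D E : Type*} [AddCommGroup C] [Module R C] [CoalgebraStruct R C]
  [AddCommGroup D] [Module R D] [CoalgebraStruct R D]
  [AddCommGroup E] [Module R E] [CoalgebraStruct R E]

structure IsCoalgMap (φ : C →ₗ[R] D) : Prop where
  counit_comp : (counit (R := R) (A := D)) ∘ₗ φ = counit
  comul_comp : (comul (R := R) (A := D)) ∘ₗ φ = map φ φ ∘ₗ comul

theorem isCoalgMap_id : IsCoalgMap (R := R) (id : C →ₗ[R] C) := by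
  constructor <;> ext <;> simp

theorem IsCoalgMap.comp {φ : D →ₗ[R] E} {ψ : C →ₗ[R] D}
    (hφ : IsCoalgMap φ) (hψ : IsCoalgMap ψ) : IsCoalgMap (φ ∘ₗ ψ) := by
  constructor
  · rw [← comp_assoc, hφ.counit_comp, hψ.counit_comp]
  · rw [← comp_assoc, hφ.comul_comp, comp_assoc, hψ.comul_comp, ← comp_assoc,
      ← TensorProduct.map_comp]

theorem IsCoalgMap.tmap {C' D' : Type*} [AddCommGroup C'] [Module R C'] [CoalgebraStruct R C']
    [AddCommGroup D'] [Module R D'] [CoalgebraStruct R D']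
    {φ : C →ₗ[R] C'} {ψ : D →ₗ[R] D'}
    (hφ : IsCoalgMap φ) (hψ : IsCoalgMap ψ) : IsCoalgMap (map φ ψ) := by
  constructor
  · rw [counit_tensor_def, counit_tensor_def, comp_assoc, ← TensorProduct.map_comp,
      hφ.counit_comp, hψ.counit_comp]
  · rw [comul_tensor_def, comul_tensor_def, comp_assoc, ← TensorProduct.map_comp,
      hφ.comul_comp, hψ.comul_comp, TensorProduct.map_comp]
    simp only [← comp_assoc]
    congr 1
    ext c c' d d'
    simp

theorem isCoalgMap_assoc {A B C' : Type*} [AddCommGroup A] [Module R A] [CoalgebraStruct R A]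
    [AddCommGroup B] [Module R B] [CoalgebraStruct R B]
    [AddCommGroup C'] [Module R C'] [CoalgebraStruct R C'] :
    IsCoalgMap (R := R) (TensorProduct.assoc R A B C').toLinearMap := by
  constructor
  · ext a b c
    simp [counit_tensor_def, mul_assoc]
  · have h1 : (comul (R := R) (A := A ⊗[R] (B ⊗[R] C'))) ∘ₗ (TensorProduct.assoc R A B C').toLinearMap
        = ((tensorTensorTensorComm R A A (B ⊗[R] C') (B ⊗[R] C')).toLinearMap
            ∘ₗ map id (tensorTensorTensorComm R B B C' C').toLinearMap
            ∘ₗ (TensorProduct.assoc R (A ⊗[R] A) (B ⊗[R] B) (C' ⊗[R] C')).toLinearMap)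
          ∘ₗ map (map (comul (R := R) (A := A)) (comul (R := R) (A := B))) (comul (R := R) (A := C')) := by
      ext a b c
      simp [comul_tensor_def]
    have h2 : map (TensorProduct.assoc R A B C').toLinearMap (TensorProduct.assoc R A B C').toLinearMap
          ∘ₗ (comul (R := R) (A := (A ⊗[R] B) ⊗[R] C'))
        = (map (TensorProduct.assoc R A B C').toLinearMap (TensorProduct.assoc R A B C').toLinearMap
            ∘ₗ (tensorTensorTensorComm R (A ⊗[R] B) (A ⊗[R] B) C' C').toLinearMap
            ∘ₗ map (tensorTensorTensorComm R A A B B).toLinearMap id)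
          ∘ₗ map (map (comul (R := R) (A := A)) (comul (R := R) (A := B))) (comul (R := R) (A := C')) := by
      ext a b c
      simp [comul_tensor_def]
    rw [h1, h2]
    congr 1
    ext a a' b b' c c'
    simp

end CMap
section PrMaps
variable (R) {C D : Type*} [AddCommGroup C] [Module R C] [CoalgebraStruct R C]
  [AddCommGroup D] [Module R D] [CoalgebraStruct R D]

variable (C D) in
/-- `c ⊗ d ↦ ε(d) • c`. -/
def prL : C ⊗[R] D →ₗ[R] C :=
  (TensorProduct.rid R C).toLinearMap ∘ₗ map id (counit (R := R) (A := D))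

variable (C D) in
/-- `c ⊗ d ↦ ε(c) • d`. -/
def prR : C ⊗[R] D →ₗ[R] D :=
  (TensorProduct.lid R D).toLinearMap ∘ₗ map (counit (R := R) (A := C)) id

theorem conv_counit_counit (hD : CoLaws R D) :
    (LinearMap.mul' R R ∘ₗ map (counit (R := R) (A := D)) counit) ∘ₗ comul = counit := by
  have hsplit : map (counit (R := R) (A := D)) (counit (R := R) (A := D))
      = map id (counit (R := R) (A := D)) ∘ₗ map (counit (R := R) (A := D)) id := by
    ext; simp
  rw [hsplit, comp_assoc, comp_assoc, hD.rCounit]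
  ext d
  simp

theorem isCoalgMap_prL (hD : CoLaws R D) : IsCoalgMap (prL R C D) := by
  constructor
  · ext c d
    simp [prL, counit_tensor_def, mul_comm]
  · have h1 : map (prL R C D) (prL R C D)
          ∘ₗ (tensorTensorTensorComm R C C D D).toLinearMap
        = (TensorProduct.rid R (C ⊗[R] C)).toLinearMap
          ∘ₗ map id (LinearMap.mul' R R ∘ₗ map (counit (R := R) (A := D)) counit) := by
      ext c c' d d'
      simp [prL, smul_smul, smul_tmul', mul_comm]
    rw [comul_tensor_def, ← comp_assoc, h1, comp_assoc, ← TensorProduct.map_comp,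
      id_comp, conv_counit_counit R hD]
    ext c d
    simp [prL]

theorem isCoalgMap_prR (hC : CoLaws R C) : IsCoalgMap (prR R C D) := by
  constructor
  · ext c d
    simp [prR, counit_tensor_def, mul_comm]
  · have h1 : map (prR R C D) (prR R C D)
          ∘ₗ (tensorTensorTensorComm R C C D D).toLinearMap
        = (TensorProduct.lid R (D ⊗[R] D)).toLinearMap
          ∘ₗ map (LinearMap.mul' R R ∘ₗ map (counit (R := R) (A := C)) counit) id := by
      ext c c' d d'
      simp [prR, smul_smul, smul_tmul', mul_comm]
    rw [comul_tensor_def, ← comp_assoc, h1, comp_assoc, ← TensorProduct.map_comp,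
      id_comp, conv_counit_counit R hC]
    ext c d
    simp [prR]
end PrMaps

section MulMap
variable {H : Type*} [Ring H] [Bialgebra R H]

theorem isCoalgMap_mul : IsCoalgMap (LinearMap.mul' R H) := by
  constructor
  · ext x y
    simp [counit_tensor_def]
  · have haux : map (LinearMap.mul' R H) (LinearMap.mul' R H)
          ∘ₗ (tensorTensorTensorComm R H H H H).toLinearMap = LinearMap.mul' R (H ⊗[R] H) := by
      ext a b c d
      simp [Algebra.TensorProduct.tmul_mul_tmul]
    rw [comul_tensor_def, ← comp_assoc, haux]
    ext x y
    simp
end MulMap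

section Conv
variable {C M N : Type*} [AddCommGroup C] [Module R C] [CoalgebraStruct R C]
  [AddCommGroup M] [Module R M] [AddCommGroup N] [Module R N]

/-- Convolution of two scalar functionals. -/
def convC (f g : C →ₗ[R] R) : C →ₗ[R] R := LinearMap.mul' R R ∘ₗ map f g ∘ₗ comul

/-- `x ↦ s(x₁) • F(x₂)`. -/
def sConv (s : C →ₗ[R] R) (F : C →ₗ[R] M) : C →ₗ[R] M :=
  (TensorProduct.lid R M).toLinearMap ∘ₗ map s F ∘ₗ comul

/-- `x ↦ t(x₂) • F(x₁)`. -/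
def convS (F : C →ₗ[R] M) (t : C →ₗ[R] R) : C →ₗ[R] M :=
  (TensorProduct.rid R M).toLinearMap ∘ₗ map F t ∘ₗ comul

variable {s t : C →ₗ[R] R} {F : C →ₗ[R] M}

theorem convC_assoc (hC : CoLaws R C) (f g k : C →ₗ[R] R) : convC (convC f g) k = convC f (convC g k) := by
  simp only [convC]
  have h1 : map (LinearMap.mul' R R ∘ₗ map f g ∘ₗ comul) k
      = (map (LinearMap.mul' R R) k ∘ₗ map (map f g) id) ∘ₗ map (comul (R := R) (A := C)) id := by
    ext x y; simp
  have h2 : map f (LinearMap.mul' R R ∘ₗ map g k ∘ₗ comul)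
      = (map f (LinearMap.mul' R R) ∘ₗ map id (map g k)) ∘ₗ map id (comul (R := R) (A := C)) := by
    ext x y; simp
  rw [h1, h2]
  simp only [comp_assoc]
  rw [hC.coassoc_symm]
  simp only [← comp_assoc]
  congr 2
  ext x y z
  simp [mul_assoc]

theorem counit_convC (hC : CoLaws R C) (f : C →ₗ[R] R) : convC (counit (R := R) (A := C)) f = f := by
  simp only [convC]
  have h : map (counit (R := R) (A := C)) f = map id f ∘ₗ map (counit (R := R) (A := C)) id := by
    ext; simp
  rw [h]
  simp only [comp_assoc]
  rw [hC.rCounit]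
  ext x
  simp

theorem convC_counit (hC : CoLaws R C) (f : C →ₗ[R] R) : convC f (counit (R := R) (A := C)) = f := by
  simp only [convC]
  have h : map f (counit (R := R) (A := C)) = map f id ∘ₗ map id (counit (R := R) (A := C)) := by
    ext; simp
  rw [h]
  simp only [comp_assoc]
  rw [hC.lCounit]
  ext x
  simp

theorem sConv_convS (hC : CoLaws R C) : convS (sConv s F) t = sConv s (convS F t) := by
  simp only [sConv, convS]
  have h1 : map ((TensorProduct.lid R M).toLinearMap ∘ₗ map s F ∘ₗ comul) t
      = (map (TensorProduct.lid R M).toLinearMap t ∘ₗ map (map s F) id)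
        ∘ₗ map (comul (R := R) (A := C)) id := by
    ext x y; simp
  have h2 : map s ((TensorProduct.rid R M).toLinearMap ∘ₗ map F t ∘ₗ comul)
      = (map s (TensorProduct.rid R M).toLinearMap ∘ₗ map id (map F t))
        ∘ₗ map id (comul (R := R) (A := C)) := by
    ext x y; simp
  rw [h1, h2]
  simp only [comp_assoc]
  rw [hC.coassoc_symm]
  simp only [← comp_assoc]
  congr 2
  ext x y z
  simp [smul_smul, mul_comm]

theorem sConv_sConv (hC : CoLaws R C) : sConv s (sConv t F) = sConv (convC s t) F := by
  simp only [sConv, convC]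
  have h1 : map s ((TensorProduct.lid R M).toLinearMap ∘ₗ map t F ∘ₗ comul)
      = (map s (TensorProduct.lid R M).toLinearMap ∘ₗ map id (map t F))
        ∘ₗ map id (comul (R := R) (A := C)) := by
    ext x y; simp
  have h2 : map (LinearMap.mul' R R ∘ₗ map s t ∘ₗ comul) F
      = (map (LinearMap.mul' R R) F ∘ₗ map (map s t) id)
        ∘ₗ map (comul (R := R) (A := C)) id := by
    ext x y; simp
  rw [h1, h2]
  simp only [comp_assoc]
  rw [← hC.coassoc]
  simp only [← comp_assoc]
  congr 2
  ext x y z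
  simp [smul_smul, mul_comm]

theorem convS_convS (hC : CoLaws R C) : convS (convS F t) s = convS F (convC t s) := by
  simp only [convS, convC]
  have h1 : map ((TensorProduct.rid R M).toLinearMap ∘ₗ map F t ∘ₗ comul) s
      = (map (TensorProduct.rid R M).toLinearMap s ∘ₗ map (map F t) id)
        ∘ₗ map (comul (R := R) (A := C)) id := by
    ext x y; simp
  have h2 : map F (LinearMap.mul' R R ∘ₗ map t s ∘ₗ comul)
      = (map F (LinearMap.mul' R R) ∘ₗ map id (map t s))
        ∘ₗ map id (comul (R := R) (A := C)) := by
    ext x y; simp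
  rw [h1, h2]
  simp only [comp_assoc]
  rw [hC.coassoc_symm]
  simp only [← comp_assoc]
  congr 2
  ext x y z
  simp [smul_smul, mul_comm]

theorem comp_sConv (G : M →ₗ[R] N) : G ∘ₗ sConv s F = sConv s (G ∘ₗ F) := by
  simp only [sConv, ← comp_assoc]
  congr 1
  ext x y
  simp

theorem comp_convS (G : M →ₗ[R] N) : G ∘ₗ convS F t = convS (G ∘ₗ F) t := by
  simp only [convS, ← comp_assoc]
  congr 1
  ext x y
  simp

end Conv

section ConvComp
variable {C C' M : Type*} [AddCommGroup C] [Module R C] [CoalgebraStruct R C]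
  [AddCommGroup C'] [Module R C'] [CoalgebraStruct R C']
  [AddCommGroup M] [Module R M]
  {φ : C' →ₗ[R] C}

theorem convC_comp (hφ : IsCoalgMap φ) (f g : C →ₗ[R] R) : convC f g ∘ₗ φ = convC (f ∘ₗ φ) (g ∘ₗ φ) := by
  simp only [convC, comp_assoc]
  rw [hφ.comul_comp]
  simp only [← comp_assoc]
  congr 1
  rw [comp_assoc, ← TensorProduct.map_comp]

theorem sConv_comp (hφ : IsCoalgMap φ) (s : C →ₗ[R] R) (F : C →ₗ[R] M) :
    sConv s F ∘ₗ φ = sConv (s ∘ₗ φ) (F ∘ₗ φ) := by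
  simp only [sConv, comp_assoc]
  rw [hφ.comul_comp]
  simp only [← comp_assoc]
  congr 1
  rw [comp_assoc, ← TensorProduct.map_comp]

theorem convS_comp (hφ : IsCoalgMap φ) (t : C →ₗ[R] R) (F : C →ₗ[R] M) :
    convS F t ∘ₗ φ = convS (F ∘ₗ φ) (t ∘ₗ φ) := by
  simp only [convS, comp_assoc]
  rw [hφ.comul_comp]
  simp only [← comp_assoc]
  congr 1
  rw [comp_assoc, ← TensorProduct.map_comp]

end ConvComp

section MapConv
variable {C D M N : Type*} [AddCommGroup C] [Module R C] [CoalgebraStruct R C]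
  [AddCommGroup D] [Module R D] [CoalgebraStruct R D]
  [AddCommGroup M] [Module R M] [AddCommGroup N] [Module R N]
  (s t : C →ₗ[R] R) (F : C →ₗ[R] M) (G : D →ₗ[R] N)

theorem map_sConv (hD : CoLaws R D) :
    map (sConv s F) G = sConv (s ∘ₗ prL R C D) (map F G) := by
  have h1 : map (sConv s F) G
      = (map (TensorProduct.lid R M).toLinearMap G ∘ₗ map (map s F) id)
        ∘ₗ map (comul (R := R) (A := C)) id := by
    ext x y; simp [sConv]
  have h2 : ((TensorProduct.lid R (M ⊗[R] N)).toLinearMap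
        ∘ₗ map (s ∘ₗ prL R C D) (map F G))
        ∘ₗ (tensorTensorTensorComm R C C D D).toLinearMap
      = ((TensorProduct.lid R (M ⊗[R] N)).toLinearMap ∘ₗ map s (map F G)
          ∘ₗ (TensorProduct.assoc R C C D).toLinearMap
          ∘ₗ map id (TensorProduct.lid R D).toLinearMap)
        ∘ₗ map id (map (counit (R := R) (A := D)) id) := by
    ext c c' d d'; simp [prL, smul_tmul', smul_smul, mul_comm]
  have h3 : map (id : C ⊗[R] C →ₗ[R] C ⊗[R] C) (map (counit (R := R) (A := D)) id)
        ∘ₗ map (comul (R := R) (A := C)) (comul (R := R) (A := D))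
      = map id (map (counit (R := R) (A := D)) id ∘ₗ comul)
        ∘ₗ map (comul (R := R) (A := C)) id := by
    ext c d; simp
  rw [h1, sConv, comul_tensor_def]
  simp only [← comp_assoc]
  rw [h2]
  simp only [comp_assoc]
  rw [h3, hD.rCounit]
  simp only [← comp_assoc]
  congr 1
  ext c c' d
  simp [smul_tmul']

theorem map_convS (hD : CoLaws R D) :
    map (convS F t) G = convS (map F G) (t ∘ₗ prL R C D) := by
  have h1 : map (convS F t) G
      = (map (TensorProduct.rid R M).toLinearMap G ∘ₗ map (map F t) id)
        ∘ₗ map (comul (R := R) (A := C)) id := by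
    ext x y; simp [convS]
  have h2 : ((TensorProduct.rid R (M ⊗[R] N)).toLinearMap
        ∘ₗ map (map F G) (t ∘ₗ prL R C D))
        ∘ₗ (tensorTensorTensorComm R C C D D).toLinearMap
      = ((TensorProduct.rid R (M ⊗[R] N)).toLinearMap
          ∘ₗ map (map F G) (LinearMap.mul' R R ∘ₗ map t id)
          ∘ₗ (tensorTensorTensorComm R C C D R).toLinearMap)
        ∘ₗ map id (map id (counit (R := R) (A := D))) := by
    ext c c' d d'; simp [prL, smul_tmul', smul_smul, mul_comm]
  have h3 : map (id : C ⊗[R] C →ₗ[R] C ⊗[R] C) (map id (counit (R := R) (A := D)))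
        ∘ₗ map (comul (R := R) (A := C)) (comul (R := R) (A := D))
      = map id (map id (counit (R := R) (A := D)) ∘ₗ comul)
        ∘ₗ map (comul (R := R) (A := C)) id := by
    ext c d; simp
  rw [h1, convS, comul_tensor_def]
  simp only [← comp_assoc]
  rw [h2]
  simp only [comp_assoc]
  rw [h3, hD.lCounit]
  simp only [← comp_assoc]
  congr 1
  ext c c' d
  simp [smul_tmul']

theorem map_sConv_right (hD : CoLaws R D) :
    map G (sConv s F) = sConv (s ∘ₗ prR R D C) (map G F) := by
  have h1 : map G (sConv s F)
      = (map G (TensorProduct.lid R M).toLinearMap ∘ₗ map id (map s F))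
        ∘ₗ map id (comul (R := R) (A := C)) := by
    ext x y; simp [sConv]
  have h2 : ((TensorProduct.lid R (N ⊗[R] M)).toLinearMap
        ∘ₗ map (s ∘ₗ prR R D C) (map G F))
        ∘ₗ (tensorTensorTensorComm R D D C C).toLinearMap
      = ((TensorProduct.lid R (N ⊗[R] M)).toLinearMap
          ∘ₗ map (LinearMap.mul' R R ∘ₗ map id s) (map G F)
          ∘ₗ (tensorTensorTensorComm R R D C C).toLinearMap)
        ∘ₗ map (map (counit (R := R) (A := D)) id) id := by
    ext d d' c c'; simp [prR, smul_tmul', smul_smul, mul_comm]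
  have h3 : map (map (counit (R := R) (A := D)) id) (id : C ⊗[R] C →ₗ[R] C ⊗[R] C)
        ∘ₗ map (comul (R := R) (A := D)) (comul (R := R) (A := C))
      = map (map (counit (R := R) (A := D)) id ∘ₗ comul) id
        ∘ₗ map id (comul (R := R) (A := C)) := by
    ext d c; simp
  rw [h1, sConv, comul_tensor_def]
  simp only [← comp_assoc]
  rw [h2]
  simp only [comp_assoc]
  rw [h3, hD.rCounit]
  simp only [← comp_assoc]
  congr 1
  ext d c c'
  simp [smul_tmul']

theorem map_convS_right (hD : CoLaws R D) :
    map G (convS F t) = convS (map G F) (t ∘ₗ prR R D C) := by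
  have h1 : map G (convS F t)
      = (map G (TensorProduct.rid R M).toLinearMap ∘ₗ map id (map F t))
        ∘ₗ map id (comul (R := R) (A := C)) := by
    ext x y; simp [convS]
  have h2 : ((TensorProduct.rid R (N ⊗[R] M)).toLinearMap
        ∘ₗ map (map G F) (t ∘ₗ prR R D C))
        ∘ₗ (tensorTensorTensorComm R D D C C).toLinearMap
      = ((TensorProduct.rid R (N ⊗[R] M)).toLinearMap
          ∘ₗ map (map G F) (LinearMap.mul' R R ∘ₗ map id t)
          ∘ₗ (tensorTensorTensorComm R D R C C).toLinearMap)
        ∘ₗ map (map id (counit (R := R) (A := D))) id := by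
    ext d d' c c'; simp [prR, smul_tmul', smul_smul, mul_comm]
  have h3 : map (map id (counit (R := R) (A := D))) (id : C ⊗[R] C →ₗ[R] C ⊗[R] C)
        ∘ₗ map (comul (R := R) (A := D)) (comul (R := R) (A := C))
      = map (map id (counit (R := R) (A := D)) ∘ₗ comul) id
        ∘ₗ map id (comul (R := R) (A := C)) := by
    ext d c; simp
  rw [h1, convS, comul_tensor_def]
  simp only [← comp_assoc]
  rw [h2]
  simp only [comp_assoc]
  rw [h3, hD.lCounit]
  simp only [← comp_assoc]
  congr 1
  ext d c c'
  simp [smul_tmul']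

end MapConv

section Sandwich
variable {C M : Type*} [AddCommGroup C] [Module R C] [CoalgebraStruct R C]
  [AddCommGroup M] [Module R M]

theorem sandwich_norm (hC : CoLaws R C) (s₁ s₂ t₂ t₁ : C →ₗ[R] R) (F : C →ₗ[R] M) :
    convS (sConv s₁ (convS (sConv s₂ F) t₂)) t₁
      = sConv (convC s₁ s₂) (convS F (convC t₂ t₁)) := by
  rw [sConv_convS hC, sConv_convS hC, sConv_convS hC, sConv_sConv hC, convS_convS hC]

theorem conv_inv_unique (hC : CoLaws R C) {a b c d a' b' c' d' : C →ₗ[R] R}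
    (hab : convC a b = convC c d)
    (ha : convC a a' = counit) (hb : convC b b' = counit)
    (hc : convC c' c = counit) (hd : convC d' d = counit) :
    convC b' a' = convC d' c' := by
  have e1 : convC (convC a b) (convC b' a') = counit (R := R) (A := C) := by
    rw [convC_assoc hC, ← convC_assoc hC b b' a', hb, counit_convC hC, ha]
  have e3 : ∀ X, convC (convC d' c') (convC (convC c d) X) = X := by
    intro X
    rw [convC_assoc hC c d X, ← convC_assoc hC (convC d' c') c (convC d X),
      convC_assoc hC d' c' c, hc, convC_counit hC, ← convC_assoc hC d' d X, hd,
      counit_convC hC]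
  calc convC b' a' = convC (convC d' c') (convC (convC c d) (convC b' a')) := (e3 _).symm
    _ = convC (convC d' c') (convC (convC a b) (convC b' a')) := by rw [hab]
    _ = convC (convC d' c') counit := by rw [e1]
    _ = convC d' c' := convC_counit hC _

end Sandwich
end TwistAux

section Ident
open TwistAux Coalgebra
variable (R H : Type*) [CommRing R] [Ring H] [HopfAlgebra R H]

theorem comul2_eq : comul2 R H = comul (R := R) (A := H ⊗[R] H) := rfl

theorem comulC3_eq : comulC3 R H = comul (R := R) (A := (H ⊗[R] H) ⊗[R] H) := rfl

theorem counit2_eq : counit2 R H = counit (R := R) (A := H ⊗[R] H) := by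
  ext x y
  simp [counit2, counit_tensor_def]

theorem convOn_comul2_eq (f g : H ⊗[R] H →ₗ[R] R) :
    convOn R (comul2 R H) f g = convC f g := rfl

theorem convOn_comulC3_eq (f g : (H ⊗[R] H) ⊗[R] H →ₗ[R] R) :
    convOn R (comulC3 R H) f g = convC f g := rfl

theorem twistMul_eq (μ : H ⊗[R] H →ₗ[R] H) (γ γ' : H ⊗[R] H →ₗ[R] R) :
    twistMul R H μ γ γ' = convS (sConv γ μ) γ' := by
  rw [twistMul, sConv, convS, comul2_eq]
  have h : map ((TensorProduct.lid R H).toLinearMap ∘ₗ map γ μ ∘ₗ comul) γ'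
      = (map (TensorProduct.lid R H).toLinearMap γ' ∘ₗ map (map γ μ) id)
        ∘ₗ map (comul (R := R) (A := H ⊗[R] H)) id := by
    ext x y; simp
  rw [h]
  simp only [← comp_assoc]
  congr 2
  ext x y z
  simp

theorem gammaL_eq (γ : H ⊗[R] H →ₗ[R] R) :
    LinearMap.mul' R R ∘ₗ map γ (counit (R := R) (A := H)) = γ ∘ₗ prL R (H ⊗[R] H) H := by
  ext x y; simp [prL, mul_comm]

theorem gammaR_eq (γ : H ⊗[R] H →ₗ[R] R) :
    LinearMap.mul' R R ∘ₗ map (counit (R := R) (A := H)) γ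
        ∘ₗ (TensorProduct.assoc R H H H).toLinearMap
      = (γ ∘ₗ prR R H (H ⊗[R] H)) ∘ₗ (TensorProduct.assoc R H H H).toLinearMap := by
  ext x y z; simp [prR, mul_comm]

end Ident

end TwistAuxSection


/-- the twisted product `h ·_γ k = γ(h₍₁₎⊗k₍₁₎) h₍₂₎k₍₂₎ γ̄(h₍₃₎⊗k₍₃₎)`
of a 2-cocycle `γ` (with convolution inverse `γ'`) is associative. -/
theorem twistMul_assoc (R H : Type*) [CommRing R] [Ring H] [HopfAlgebra R H]
    (γ γ' : H ⊗[R] H →ₗ[R] R) (hco : IsCocycle R H (mulH R H) γ γ') :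
    twistMul R H (mulH R H) γ γ' ∘ₗ map (twistMul R H (mulH R H) γ γ') LinearMap.id
      = twistMul R H (mulH R H) γ γ' ∘ₗ map LinearMap.id (twistMul R H (mulH R H) γ γ') ∘ₗ (TensorProduct.assoc R H H H).toLinearMap := by
  open TwistAux Coalgebra in
  (unfold mulH)
  have hH := TwistAux.coLaws_of (R := R) H
  have hC3 : TwistAux.CoLaws R ((H ⊗[R] H) ⊗[R] H) := (hH.tensor hH).tensor hH
  have hμ : TwistAux.IsCoalgMap (LinearMap.mul' R H) := TwistAux.isCoalgMap_mul
  have hid : TwistAux.IsCoalgMap (LinearMap.id : H →ₗ[R] H) := TwistAux.isCoalgMap_id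
  have hφ₁ := hμ.tmap hid
  have hα : TwistAux.IsCoalgMap (TensorProduct.assoc R H H H).toLinearMap :=
    TwistAux.isCoalgMap_assoc
  have hφ₂ := (hid.tmap hμ).comp hα
  have hp : TwistAux.IsCoalgMap (TwistAux.prL R (H ⊗[R] H) H) := TwistAux.isCoalgMap_prL (R := R) hH
  have hq : TwistAux.IsCoalgMap (TwistAux.prR R H (H ⊗[R] H)) := TwistAux.isCoalgMap_prR (R := R) hH
  have hqα := hq.comp hα
  have hinvr : TwistAux.convC (C := H ⊗[R] H) γ γ' = Coalgebra.counit := by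
    have h := hco.conv_inv_right
    rwa [convOn_comul2_eq, counit2_eq] at h
  have hinvl : TwistAux.convC (C := H ⊗[R] H) γ' γ = Coalgebra.counit := by
    have h := hco.conv_inv_left
    rwa [convOn_comul2_eq, counit2_eq] at h
  have hcoc := hco.cocycle
  unfold mulH at hcoc
  rw [convOn_comulC3_eq, convOn_comulC3_eq, gammaL_eq, gammaR_eq] at hcoc
  rw [twistMul_eq]
  rw [TwistAux.map_convS _ _ _ hH, TwistAux.map_sConv _ _ _ hH,
    TwistAux.map_convS_right _ _ _ hH, TwistAux.map_sConv_right _ _ _ hH,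
    TwistAux.convS_comp hα, TwistAux.sConv_comp hα,
    TwistAux.comp_convS, TwistAux.comp_convS, TwistAux.comp_sConv, TwistAux.comp_sConv,
    TwistAux.convS_comp hφ₁, TwistAux.sConv_comp hφ₁,
    TwistAux.convS_comp hφ₂, TwistAux.sConv_comp hφ₂,
    TwistAux.sandwich_norm hC3, TwistAux.sandwich_norm hC3]
  have hM : (LinearMap.mul' R H) ∘ₗ (map LinearMap.id (LinearMap.mul' R H)
        ∘ₗ (TensorProduct.assoc R H H H).toLinearMap)
      = LinearMap.mul' R H ∘ₗ map (LinearMap.mul' R H) LinearMap.id := by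
    ext a b c; simp [mul_assoc]
  have ha : TwistAux.convC (γ ∘ₗ TwistAux.prL R (H ⊗[R] H) H)
      (γ' ∘ₗ TwistAux.prL R (H ⊗[R] H) H) = Coalgebra.counit := by
    rw [← TwistAux.convC_comp hp, hinvr, hp.counit_comp]
  have hb : TwistAux.convC (γ ∘ₗ map (LinearMap.mul' R H) LinearMap.id)
      (γ' ∘ₗ map (LinearMap.mul' R H) LinearMap.id) = Coalgebra.counit := by
    rw [← TwistAux.convC_comp hφ₁, hinvr, hφ₁.counit_comp]
  have hc : TwistAux.convC ((γ' ∘ₗ TwistAux.prR R H (H ⊗[R] H)) ∘ₗ (TensorProduct.assoc R H H H).toLinearMap)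
      ((γ ∘ₗ TwistAux.prR R H (H ⊗[R] H)) ∘ₗ (TensorProduct.assoc R H H H).toLinearMap)
      = Coalgebra.counit := by
    rw [comp_assoc, comp_assoc, ← TwistAux.convC_comp hqα, hinvl, hqα.counit_comp]
  have hd : TwistAux.convC (γ' ∘ₗ (map LinearMap.id (LinearMap.mul' R H) ∘ₗ (TensorProduct.assoc R H H H).toLinearMap))
      (γ ∘ₗ (map LinearMap.id (LinearMap.mul' R H) ∘ₗ (TensorProduct.assoc R H H H).toLinearMap))
      = Coalgebra.counit := by
    rw [← TwistAux.convC_comp hφ₂, hinvl, hφ₂.counit_comp]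
  have hinv := TwistAux.conv_inv_unique hC3 hcoc ha hb hc hd
  rw [hcoc, hM, hinv]
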